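/- (The Choi point) Fix n > 1 and let d = n². Consider the d-tuple X of n×n matrices X_{(i,j)} = (1/√n)·E_{ij}, 1 ≤ i,j ≤ n. Then X is a row co-isometry (Σ_{i,j} X_{(i,j)}X_{(i,j)}* = I_n), and for every 0 < t < 1 the elementary Pick matrix of tX is P_{tX} = 𝔠_n + (t²/(n(1−t²)))·I_{n²}; consequently lim_{t→1⁻} ((1−t²)/t²)·P_{tX} = (1/n)·I_{n²}. -/

import Mathlib

/-!
Common definitions: the ψ-involution, `vec`, the elementary Pick matrix, the Choi matrix,
Kronecker-product helpers with right-associated index types, the boomerang matrices, the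
commutation matrix, and the Moore–Penrose predicate.
-/

open Matrix Filter
open scoped Kronecker Matrix.Norms.L2Operator ComplexOrder

noncomputable section

/-- Square `n × n` complex matrices. -/
abbrev Mat (n : ℕ) := Matrix (Fin n) (Fin n) ℂ

/-- Entrywise complex conjugate of a matrix. -/
def conjM {m k : Type*} (A : Matrix m k ℂ) : Matrix m k ℂ := A.map (starRingEnd ℂ)

/-- `vec A` stacks the columns of `A`: the slot `(j, i)` (column `j`, row `i`) holds `A i j`. -/
def vecM (n : ℕ) (A : Mat n) : Matrix (Fin n × Fin n) Unit ℂ := Matrix.of fun p _ => A p.2 p.1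

/-- The `ψ`-involution on `M_{n²}(ℂ)`: the linear map determined on matrix units by
`ψ(E_{ij} ⊗ E_{kℓ}) = E_{ℓj} ⊗ E_{ki}`, equivalently `ψ(A ⊗ B) = vec(B)·vec(A)ᵀ`. -/
def psi (n : ℕ) (U : Matrix (Fin n × Fin n) (Fin n × Fin n) ℂ) :
    Matrix (Fin n × Fin n) (Fin n × Fin n) ℂ :=
  Matrix.of fun p q => U (q.2, p.2) (q.1, p.1)

/-- `X` is a strict row contraction: `‖Σᵢ Xᵢ Xᵢ*‖ < 1` in the L² operator norm. -/
def StrictRowContraction {n : ℕ} {ι : Type*} [Fintype ι] (X : ι → Mat n) : Prop :=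
  ‖∑ i, X i * (X i)ᴴ‖ < 1

/-- The elementary Pick matrix `P_X = ψ((I_{n²} − Σᵢ conj(Xᵢ) ⊗ Xᵢ)⁻¹)`. -/
def pick {n : ℕ} {ι : Type*} [Fintype ι] (X : ι → Mat n) :
    Matrix (Fin n × Fin n) (Fin n × Fin n) ℂ :=
  psi n ((1 - ∑ i, conjM (X i) ⊗ₖ X i)⁻¹)

/-- The Choi matrix `𝔠_n = Σ_{i,j} E_{ij} ⊗ E_{ij} ∈ M_{n²}(ℂ)`. -/
def choiM (n : ℕ) : Matrix (Fin n × Fin n) (Fin n × Fin n) ℂ :=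
  ∑ i : Fin n, ∑ j : Fin n, single i j (1 : ℂ) ⊗ₖ single i j (1 : ℂ)

/-- `X^w = X_{i₁} ⋯ X_{i_k}` for a word `w = i₁⋯i_k` in the free monoid. -/
def wordProd {n : ℕ} {ι : Type*} (X : ι → Mat n) (w : List ι) : Mat n := (w.map X).prod

/-- Kronecker product `A ⊗ C` where `A` carries a product index, with the resulting
index types flattened right-associatively (`(a × b) × c ↦ a × (b × c)`). -/
def krA {a b c a' b' c' : Type*} (A : Matrix (a × b) (a' × b') ℂ) (C : Matrix c c' ℂ) :
    Matrix (a × b × c) (a' × b' × c') ℂ :=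
  Matrix.of fun p q => A (p.1, p.2.1) (q.1, q.2.1) * C p.2.2 q.2.2

/-- Kronecker product `M ⊗ C` where `M` carries a triple product index, flattened
right-associatively. -/
def krT {a b c e a' b' c' e' : Type*} (M : Matrix (a × b × c) (a' × b' × c') ℂ)
    (C : Matrix e e' ℂ) : Matrix (a × b × c × e) (a' × b' × c' × e') ℂ :=
  Matrix.of fun p q => M (p.1, p.2.1, p.2.2.1) (q.1, q.2.1, q.2.2.1) * C p.2.2.2 q.2.2.2

/-- Triple Kronecker product `A ⊗ B ⊗ C` with right-associated index types. -/
def kr3 {a b c a' b' c' : Type*} (A : Matrix a a' ℂ) (B : Matrix b b' ℂ) (C : Matrix c c' ℂ) :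
    Matrix (a × b × c) (a' × b' × c') ℂ :=
  Matrix.of fun p q => A p.1 q.1 * B p.2.1 q.2.1 * C p.2.2 q.2.2

/-- The boomerang matrix `B̆ = Σ_{i,j} e_i ⊗ e_j ⊗ E_{ij} ∈ M_{n³×n}(ℂ)`:
its entry at row `(i, j, k)`, column `ℓ` is `δ_{k i} δ_{ℓ j}`. -/
def boom (n : ℕ) : Matrix (Fin n × Fin n × Fin n) (Fin n) ℂ :=
  Matrix.of fun p l => if p.2.2 = p.1 ∧ l = p.2.1 then 1 else 0

/-- The commutation (permutation) matrix `Q_{n,r}`, satisfying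
`Q_{n,r} (U ⊗ V) Q_{n,r}ᵀ = V ⊗ U` for `U ∈ M_n`, `V ∈ M_r`. -/
def commMat (n r : ℕ) : Matrix (Fin r × Fin n) (Fin n × Fin r) ℂ :=
  Matrix.of fun p q => if p.2 = q.1 ∧ p.1 = q.2 then 1 else 0

/-- `Σ_{i,j} e_i ⊗ e_j ⊗ I_r ⊗ E_{ij}`: its entry at row `(i, j, a, k)`, column `(b, ℓ)`
is `δ_{k i} δ_{ℓ j} δ_{a b}`. -/
def preBoom (n r : ℕ) : Matrix (Fin n × Fin n × Fin r × Fin n) (Fin r × Fin n) ℂ :=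
  Matrix.of fun p q => if p.2.2.2 = p.1 ∧ q.2 = p.2.1 ∧ p.2.2.1 = q.1 then 1 else 0

/-- The ampliated boomerang matrix `B̆_r = (Σ_{i,j} e_i ⊗ e_j ⊗ I_r ⊗ E_{ij}) · Q_{n,r}`. -/
def boomAmp (n r : ℕ) : Matrix (Fin n × Fin n × Fin r × Fin n) (Fin n × Fin r) ℂ :=
  preBoom n r * commMat n r

/-- `B` is the Moore–Penrose pseudoinverse of `A` (the four Penrose conditions). -/
structure IsMoorePenroseInv {m k : Type*} [Fintype m] [Fintype k]
    (A : Matrix m k ℂ) (B : Matrix k m ℂ) : Prop where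
  mul_inv_mul : A * B * A = A
  inv_mul_inv : B * A * B = B
  hermitian_mul_inv : (A * B)ᴴ = A * B
  hermitian_inv_mul : (B * A)ᴴ = B * A

/-- The Choi point: the `n²`-tuple of `n×n` matrices `X_{(i,j)} = (1/√n)·E_{ij}`. -/
def choiPoint (n : ℕ) : Fin n × Fin n → Mat n :=
  fun p => ((Real.sqrt n : ℂ))⁻¹ • single p.1 p.2 (1 : ℂ)

lemma choiM_apply (n : ℕ) (p q : Fin n × Fin n) :
    choiM n p q = if p.1 = p.2 ∧ q.1 = q.2 then 1 else 0 := by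
  simp only [choiM, Matrix.sum_apply, Matrix.kroneckerMap_apply, Matrix.single,
    Matrix.of_apply, ite_and]
  rw [Finset.sum_comm]
  simp [Finset.sum_ite_eq, ite_and, eq_comm]

lemma choiM_sq (n : ℕ) : choiM n * choiM n = (n : ℂ) • choiM n := by
  ext p q
  simp only [Matrix.mul_apply, choiM_apply, Matrix.smul_apply, smul_eq_mul]
  by_cases h1 : p.1 = p.2 <;> by_cases h2 : q.1 = q.2 <;>
    simp [h1, h2, ite_and, Finset.sum_ite_eq, Finset.card_univ]
  · rw [Fintype.sum_prod_type]
    simp [Finset.sum_ite_eq]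

lemma psi_one (n : ℕ) : psi n 1 = choiM n := by
  ext p q
  simp [psi, choiM_apply, Matrix.one_apply, Prod.ext_iff, and_comm, eq_comm]

lemma psi_choiM (n : ℕ) : psi n (choiM n) = 1 := by
  ext p q
  simp [psi, choiM_apply, Matrix.one_apply, Prod.ext_iff, eq_comm, and_comm]

lemma psi_add (n : ℕ) (A B : Matrix (Fin n × Fin n) (Fin n × Fin n) ℂ) :
    psi n (A + B) = psi n A + psi n B := by
  ext p q; simp [psi]

lemma psi_smul (n : ℕ) (c : ℂ) (A : Matrix (Fin n × Fin n) (Fin n × Fin n) ℂ) :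
    psi n (c • A) = c • psi n A := by
  ext p q; simp [psi]

lemma conj_choiPoint (n : ℕ) (t : ℝ) (p : Fin n × Fin n) :
    conjM ((t:ℂ) • choiPoint n p) = (t:ℂ) • choiPoint n p := by
  ext a b
  simp only [conjM, Matrix.map_apply, choiPoint, Matrix.smul_apply, smul_eq_mul,
    Matrix.single, Matrix.of_apply]
  split <;> simp

lemma sqrt_inv_sq (n : ℕ) (hn : 0 < n) :
    ((Real.sqrt n : ℂ))⁻¹ * ((Real.sqrt n : ℂ))⁻¹ = (n : ℂ)⁻¹ := by
  have h : (Real.sqrt n : ℂ) * (Real.sqrt n : ℂ) = (n : ℂ) := by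
    norm_cast
    exact_mod_cast Real.mul_self_sqrt (by positivity)
  rw [← mul_inv, h]

lemma sum_kron_choiPoint (n : ℕ) (hn : 0 < n) (t : ℝ) :
    ∑ p : Fin n × Fin n, conjM ((t:ℂ) • choiPoint n p) ⊗ₖ ((t:ℂ) • choiPoint n p)
      = ((t^2/n : ℝ) : ℂ) • choiM n := by
  have hs : ∀ p : Fin n × Fin n, ((t:ℂ) • choiPoint n p) ⊗ₖ ((t:ℂ) • choiPoint n p)
      = ((t^2/n : ℝ):ℂ) • (single p.1 p.2 (1:ℂ) ⊗ₖ single p.1 p.2 (1:ℂ)) := by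
    intro p
    simp only [choiPoint, smul_smul, Matrix.smul_kronecker, Matrix.kronecker_smul, smul_smul]
    congr 1
    push_cast
    rw [div_eq_mul_inv, ← sqrt_inv_sq n hn]
    ring
  simp only [conj_choiPoint, hs, ← Finset.smul_sum]
  congr 1
  rw [choiM, Fintype.sum_prod_type]

lemma pick_choiPoint (n : ℕ) (hn : 1 < n) (t : ℝ) (ht : t ∈ Set.Ioo (0:ℝ) 1) :
    pick (fun p => (t : ℂ) • choiPoint n p) =
      choiM n + ((t ^ 2 / (n * (1 - t ^ 2)) : ℝ) : ℂ) • 1 := by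
  have hn0 : (0:ℝ) < n := by exact_mod_cast Nat.lt_of_lt_of_le Nat.zero_lt_one hn.le
  have ht0 : t ≠ 0 := ne_of_gt ht.1
  have ht1 : (1:ℝ) - t^2 ≠ 0 := by nlinarith [ht.1, ht.2]
  set s : ℂ := ((t^2/n : ℝ) : ℂ)
  set c : ℂ := ((t ^ 2 / (n * (1 - t ^ 2)) : ℝ) : ℂ)
  have hkey : (1 - s • choiM n) * (1 + c • choiM n) = 1 := by
    have hcoef : c - s - s * c * n = 0 := by
      simp only [s, c, ← Complex.ofReal_natCast, ← Complex.ofReal_mul, ← Complex.ofReal_sub]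
      norm_cast
      field_simp
      ring
    have expand : (1 - s • choiM n) * (1 + c • choiM n)
        = 1 + (c - s - s * c * n) • choiM n := by
      rw [sub_mul, one_mul, mul_add, mul_one, Matrix.smul_mul, Matrix.mul_smul, smul_smul,
        choiM_sq]
      module
    rw [expand, hcoef, zero_smul, add_zero]
  have hinv : (1 - ∑ p : Fin n × Fin n,
      conjM ((t:ℂ) • choiPoint n p) ⊗ₖ ((t:ℂ) • choiPoint n p))⁻¹ = 1 + c • choiM n := by
    rw [sum_kron_choiPoint n (by exact_mod_cast hn0) t]
    exact Matrix.inv_eq_right_inv hkey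
  rw [pick, hinv, psi_add, psi_smul, psi_one, psi_choiM]
lemma stdBasis_conjT (n : ℕ) (i j : Fin n) :
    (single i j (1:ℂ))ᴴ = single j i (1:ℂ) := by
  ext a b
  simp [Matrix.conjTranspose_apply, Matrix.single, and_comm]

lemma coiso (n : ℕ) (hn : 0 < n) :
    ∑ p : Fin n × Fin n, choiPoint n p * (choiPoint n p)ᴴ = (1 : Mat n) := by
  have h : ∀ p : Fin n × Fin n,
      choiPoint n p * (choiPoint n p)ᴴ = (n:ℂ)⁻¹ • single p.1 p.1 (1:ℂ) := by
    intro p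
    simp only [choiPoint, Matrix.conjTranspose_smul, Matrix.smul_mul, Matrix.mul_smul,
      smul_smul, stdBasis_conjT, Matrix.single_mul_single_same, mul_one]
    congr 1
    rw [← sqrt_inv_sq n hn]
    simp
  have hsum : ∑ i : Fin n, single i i (1:ℂ) = (1 : Mat n) := by
    ext a b
    simp [Matrix.sum_apply, Matrix.one_apply, Matrix.single, ite_and,
      Finset.sum_ite_eq, eq_comm]
  simp only [h, ← Finset.smul_sum]
  rw [Fintype.sum_prod_type]
  simp only [Finset.sum_const, Finset.card_univ, Fintype.card_fin, hsum]
  rw [← Finset.smul_sum, hsum, ← Nat.cast_smul_eq_nsmul ℂ, smul_smul, inv_mul_cancel₀, one_smul]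
  exact Nat.cast_ne_zero.mpr hn.ne'
/-- **The Choi point.** For `n > 1` and `d = n²`, the tuple
`X_{(i,j)} = (1/√n)·E_{ij}` is a row co-isometry, for every `0 < t < 1` the elementary Pick
matrix of `tX` is `P_{tX} = 𝔠_n + (t²/(n(1−t²)))·I_{n²}`, and consequently
`lim_{t→1⁻} ((1−t²)/t²)·P_{tX} = (1/n)·I_{n²}`. -/
theorem choi_point_pick {n : ℕ} (hn : 1 < n) :
    (∑ p : Fin n × Fin n, choiPoint n p * (choiPoint n p)ᴴ = (1 : Mat n)) ∧
    (∀ t : ℝ, t ∈ Set.Ioo (0 : ℝ) 1 →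
      pick (fun p => (t : ℂ) • choiPoint n p) =
        choiM n + ((t ^ 2 / (n * (1 - t ^ 2)) : ℝ) : ℂ) •
          (1 : Matrix (Fin n × Fin n) (Fin n × Fin n) ℂ)) ∧
    Filter.Tendsto
      (fun t : ℝ => (((1 - t ^ 2) / t ^ 2 : ℝ) : ℂ) • pick (fun p => (t : ℂ) • choiPoint n p))
      (nhdsWithin 1 (Set.Ioo (0 : ℝ) 1))
      (nhds (((n : ℝ)⁻¹ : ℂ) • (1 : Matrix (Fin n × Fin n) (Fin n × Fin n) ℂ))) := by
  have hn0 : 0 < n := Nat.lt_of_lt_of_le Nat.zero_lt_one hn.le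
  refine ⟨coiso n hn0, fun t ht => pick_choiPoint n hn t ht, ?_⟩
  have hcong : ∀ t ∈ Set.Ioo (0:ℝ) 1,
      (((1 - t ^ 2) / t ^ 2 : ℝ) : ℂ) • choiM n
        + (((n:ℝ)⁻¹ : ℝ) : ℂ) • (1 : Matrix (Fin n × Fin n) (Fin n × Fin n) ℂ)
      = (((1 - t ^ 2) / t ^ 2 : ℝ) : ℂ) • pick (fun p => (t : ℂ) • choiPoint n p) := by
    intro t ht
    rw [pick_choiPoint n hn t ht, smul_add, smul_smul, ← Complex.ofReal_mul]
    have ht0 : t ≠ 0 := ne_of_gt ht.1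
    have ht1 : (1:ℝ) - t^2 ≠ 0 := by nlinarith [ht.1, ht.2]
    have hnn : (n:ℝ) ≠ 0 := by positivity
    congr 3
    field_simp
  have h1 : Filter.Tendsto (fun t:ℝ => (((1 - t ^ 2) / t ^ 2 : ℝ) : ℂ))
      (nhdsWithin 1 (Set.Ioo (0:ℝ) 1)) (nhds 0) := by
    have hc : ContinuousAt (fun t:ℝ => (1 - t^2)/t^2) 1 :=
      ContinuousAt.div (by fun_prop) (by fun_prop) (by norm_num)
    have := (Complex.continuous_ofReal.continuousAt.comp hc).tendsto
    have h2 := this.mono_left (nhdsWithin_le_nhds (s := Set.Ioo (0:ℝ) 1))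
    simpa only [Function.comp_def, show ((((1:ℝ) - 1^2)/1^2 : ℝ) : ℂ) = 0 by norm_num] using h2
  have h3 := (h1.smul_const (choiM n)).add
    (tendsto_const_nhds (f := nhdsWithin (1:ℝ) (Set.Ioo (0:ℝ) 1))
      (x := (((n:ℝ)⁻¹ : ℝ) : ℂ) • (1 : Matrix (Fin n × Fin n) (Fin n × Fin n) ℂ)))
  rw [zero_smul, zero_add] at h3
  have h4 := Filter.Tendsto.congr' (Filter.eventually_of_mem self_mem_nhdsWithin hcong) h3
  simpa [Complex.ofReal_inv] using h4
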